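/- The skew Schur Q polynomial identity Q_{(3,2,1,0)}(c) = q_{32}(c)q_1(c) - q_{31}(c)q_2(c) + q_3(c)q_{21}(c), and in the substitution c_{2k+1} = (a_1^{2k+1} + a_2^{2k+1} + a_3^{2k+1} + a_4^{2k+1})/(2k+1) it factors as Q_{(3,2,1,0)} = 8(a_4+a_3)(a_2+a_4)(a_3+a_2)(a_1+a_4)(a_1+a_3)(a_1+a_2); in particular Q_{(3,2,1,0)}(a) > 0 whenever all a_i > 0. -/

import Mathlib

set_option maxHeartbeats 4000000

open Matrix

/-- The Pfaffian of an `N × N` matrix, via the Laplace-type expansion along the first row.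
For odd `N` it is `0`, matching the convention that only even-sized skew-symmetric matrices
have a (possibly nonzero) Pfaffian. -/
noncomputable def pf (R : Type*) [CommRing R] : (N : ℕ) → Matrix (Fin N) (Fin N) R → R
  | 0, _ => 1
  | 1, _ => 0
  | (N+2), A => ∑ j : Fin (N+1), (-1 : R)^(j:ℕ) * A 0 j.succ *
      pf R N (fun a b => A ((j.succAbove a).succ) ((j.succAbove b).succ))

/-- The generating series ξ(c,p) = Σ_{k odd} c_k p^k as a formal power series. -/
noncomputable def xi (c : ℕ → ℝ) : PowerSeries ℝ :=
  PowerSeries.mk fun k => if Odd k then c k else 0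

/-- The Schur Q polynomials `q k c`, defined by `e^{2ξ(c,p)} = Σ_{k≥0} q_k(c) p^k`. -/
noncomputable def q (c : ℕ → ℝ) (k : ℕ) : ℝ :=
  PowerSeries.coeff (R := ℝ) k
    (∑ j ∈ Finset.range (k+1),
      (PowerSeries.C (R := ℝ) ((j.factorial : ℝ))⁻¹) * ((PowerSeries.C (R := ℝ) 2) * xi c) ^ j)

/-- q_{a,b}(c) = q_a(c) q_b(c) + 2 Σ_{k=1}^b (-1)^k q_{a+k}(c) q_{b-k}(c). -/
noncomputable def qq (c : ℕ → ℝ) (a b : ℕ) : ℝ :=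
  q c a * q c b + 2 * ∑ k ∈ Finset.Icc 1 b, (-1 : ℝ)^k * q c (a + k) * q c (b - k)

/-- `Q_{(3,2,1,0)}(c)`: the Pfaffian of the `4 × 4` skew matrix `(q_{λ_i, λ_j})` for the
strict partition `λ = (3,2,1,0)`. -/
noncomputable def Q3210 (c : ℕ → ℝ) : ℝ :=
  pf ℝ 4 (Matrix.of fun i j : Fin 4 => qq c (![3, 2, 1, 0] i) (![3, 2, 1, 0] j))

/-- The power-sum substitution `c_k = (a_1^k + a_2^k + a_3^k + a_4^k)/k`. -/
noncomputable def cOf (a : Fin 4 → ℝ) : ℕ → ℝ := fun k => (∑ i, a i ^ k) / k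

lemma coeff_xi (c : ℕ → ℝ) (n : ℕ) :
    PowerSeries.coeff n (xi c) = if Odd n then c n else 0 := by
  simp [xi]

lemma q_zero (c : ℕ → ℝ) : q c 0 = 1 := by simp [q]

lemma q_one (c : ℕ → ℝ) : q c 1 = 2 * c 1 := by
  simp [q, Finset.sum_range_succ, pow_succ, PowerSeries.coeff_mul,
    Finset.Nat.sum_antidiagonal_eq_sum_range_succ_mk, coeff_xi]

lemma q_two (c : ℕ → ℝ) : q c 2 = 2 * c 1 ^ 2 := by
  simp [q, Finset.sum_range_succ, pow_succ, PowerSeries.coeff_mul,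
    Finset.Nat.sum_antidiagonal_eq_sum_range_succ_mk, coeff_xi, Nat.odd_iff]
  ring

lemma q_three (c : ℕ → ℝ) : q c 3 = 4/3 * c 1 ^ 3 + 2 * c 3 := by
  simp [q, Finset.sum_range_succ, pow_succ, PowerSeries.coeff_mul,
    Finset.Nat.sum_antidiagonal_eq_sum_range_succ_mk, coeff_xi, Nat.odd_iff]
  norm_num [Nat.factorial]; ring

lemma q_four (c : ℕ → ℝ) : q c 4 = 2/3 * c 1 ^ 4 + 4 * c 1 * c 3 := by
  simp [q, Finset.sum_range_succ, pow_succ, PowerSeries.coeff_mul,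
    Finset.Nat.sum_antidiagonal_eq_sum_range_succ_mk, coeff_xi, Nat.odd_iff]
  norm_num [Nat.factorial]; ring

lemma q_five (c : ℕ → ℝ) : q c 5 = 4/15 * c 1 ^ 5 + 4 * c 1 ^ 2 * c 3 + 2 * c 5 := by
  simp (config := { maxSteps := 10000000 }) [q, Finset.sum_range_succ, pow_succ,
    PowerSeries.coeff_mul, Finset.Nat.sum_antidiagonal_eq_sum_range_succ_mk, coeff_xi,
    Nat.odd_iff]
  norm_num [Nat.factorial]; ring

lemma qq_b0 (c : ℕ → ℝ) (a : ℕ) : qq c a 0 = q c a := by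
  simp [qq, q_zero]

lemma Q3210_eq (c : ℕ → ℝ) :
    Q3210 c = qq c 3 2 * q c 1 - qq c 3 1 * q c 2 + q c 3 * qq c 2 1 := by
  simp [Q3210, pf, Fin.sum_univ_succ, Fin.succAbove, qq_b0]
  ring

lemma qq_expand (c : ℕ → ℝ) (a : ℕ) :
    qq c a 2 = q c a * q c 2 - 2 * q c (a+1) * q c 1 + 2 * q c (a+2) ∧
    qq c a 1 = q c a * q c 1 - 2 * q c (a+1) := by
  constructor <;>
  · simp [qq, show Finset.Icc 1 2 = {1, 2} from rfl, show Finset.Icc 1 1 = {1} from rfl,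
      Finset.sum_insert, Finset.sum_singleton, q_zero]
    ring

lemma Q3210_factor (a : Fin 4 → ℝ) : Q3210 (cOf a) =
    8 * ((a 0 + a 1) * (a 0 + a 2) * (a 0 + a 3) * (a 1 + a 2) * (a 1 + a 3) *
      (a 2 + a 3)) := by
  rw [Q3210_eq, (qq_expand (cOf a) 3).1, (qq_expand (cOf a) 3).2, (qq_expand (cOf a) 2).2]
  have h1 : cOf a 1 = (a 0 + a 1 + a 2 + a 3) / 1 := by
    simp [cOf, Fin.sum_univ_four]
  have h3 : cOf a 3 = (a 0 ^ 3 + a 1 ^ 3 + a 2 ^ 3 + a 3 ^ 3) / 3 := by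
    simp [cOf, Fin.sum_univ_four]
  have h5 : cOf a 5 = (a 0 ^ 5 + a 1 ^ 5 + a 2 ^ 5 + a 3 ^ 5) / 5 := by
    simp [cOf, Fin.sum_univ_four]
  simp only [show (3:ℕ)+1 = 4 from rfl, show (3:ℕ)+2 = 5 from rfl, show (2:ℕ)+1 = 3 from rfl,
    q_one, q_two, q_three, q_four, q_five, h1, h3, h5]
  ring

/-- `Q_{(3,2,1,0)}(c) = q_{32} q_1 - q_{31} q_2 + q_3 q_{21}`; under the substitution
`c_{2k+1} = (a_1^{2k+1} + ⋯ + a_4^{2k+1})/(2k+1)` it factors as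
`8 Π_{i<j} (a_i + a_j)`, hence is positive when all `a_i > 0`. -/
theorem Q3210_factorization :
    (∀ c : ℕ → ℝ, Q3210 c = qq c 3 2 * q c 1 - qq c 3 1 * q c 2 + q c 3 * qq c 2 1) ∧
    (∀ a : Fin 4 → ℝ, Q3210 (cOf a) =
      8 * ((a 0 + a 1) * (a 0 + a 2) * (a 0 + a 3) * (a 1 + a 2) * (a 1 + a 3) *
        (a 2 + a 3))) ∧
    (∀ a : Fin 4 → ℝ, (∀ i, 0 < a i) → 0 < Q3210 (cOf a)) := by
  refine ⟨Q3210_eq, Q3210_factor, fun a ha => ?_⟩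
  rw [Q3210_factor]
  have h0 := ha 0; have h1 := ha 1; have h2 := ha 2; have h3 := ha 3
  positivity
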